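/- Let G be a bipartite graph, M a maximum matching in G, and 𝓤 the set of unreachable vertices with respect to M. Then in every maximum matching N of G, every vertex of 𝓤 is matched, and its partner in N also belongs to 𝓤. -/

import Mathlib

open SimpleGraph

variable {V : Type*}

/-- `M` is a matching in the graph `G`: a set of edges of `G` no two of which
share a vertex. -/
def IsMatchingIn (G : SimpleGraph V) (M : Set (Sym2 V)) : Prop :=
  M ⊆ G.edgeSet ∧ ∀ e ∈ M, ∀ f ∈ M, e ≠ f → ∀ v : V, v ∈ e → v ∉ f

/-- A vertex `v` is matched (covered) by the matching `M`. -/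
def IsMatchedBy (M : Set (Sym2 V)) (v : V) : Prop :=
  ∃ e ∈ M, v ∈ e

/-- The list of edges of a path given as a list of vertices. -/
def pathEdges (p : List V) : List (Sym2 V) :=
  (p.zip p.tail).map fun q => s(q.1, q.2)

/-- `p` is an alternating path from `u` to `v` in `G` with respect to the matching `M`:
its consecutive vertices are adjacent in `G`, it repeats no vertex, and its edges
alternate between edges in `M` and edges not in `M`. -/
def IsAltPath (G : SimpleGraph V) (M : Set (Sym2 V)) (u v : V) (p : List V) : Prop :=
  p.Chain' G.Adj ∧ p.Nodup ∧
    (pathEdges p).Chain' (fun e f => (e ∈ M ↔ f ∉ M)) ∧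
    p.head? = some u ∧ p.getLast? = some v

/-- `v` is even with respect to `M`: there is an even-length alternating path from
an `M`-unmatched vertex to `v`. -/
def EvenVtx (G : SimpleGraph V) (M : Set (Sym2 V)) (v : V) : Prop :=
  ∃ u p, ¬ IsMatchedBy M u ∧ IsAltPath G M u v p ∧ Even (pathEdges p).length

/-- `v` is odd with respect to `M`: there is an odd-length alternating path from
an `M`-unmatched vertex to `v`. -/
def OddVtx (G : SimpleGraph V) (M : Set (Sym2 V)) (v : V) : Prop :=
  ∃ u p, ¬ IsMatchedBy M u ∧ IsAltPath G M u v p ∧ Odd (pathEdges p).length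

/-- `v` is unreachable with respect to `M`: there is no alternating path from any
`M`-unmatched vertex to `v`. -/
def UnreachableVtx (G : SimpleGraph V) (M : Set (Sym2 V)) (v : V) : Prop :=
  ¬ ∃ u p, ¬ IsMatchedBy M u ∧ IsAltPath G M u v p

/-- `M` is a maximum (cardinality) matching in `G`. -/
def IsMaxMatching (G : SimpleGraph V) (M : Set (Sym2 V)) : Prop :=
  IsMatchingIn G M ∧ ∀ N, IsMatchingIn G N → N.ncard ≤ M.ncard

/-- `G` is bipartite with the two sides given by `side`. -/
def IsBipartiteWith (G : SimpleGraph V) (side : V → Bool) : Prop :=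
  ∀ u v, G.Adj u v → side u ≠ side v


/- ### Auxiliary lemmas ### -/

@[simp] lemma pathEdges_nil : pathEdges ([] : List V) = [] := rfl
@[simp] lemma pathEdges_singleton (a : V) : pathEdges [a] = [] := rfl
@[simp] lemma pathEdges_cons_cons (a b : V) (l : List V) :
    pathEdges (a :: b :: l) = s(a, b) :: pathEdges (b :: l) := rfl

lemma length_pathEdges (p : List V) : (pathEdges p).length = p.length - 1 := by
  induction p with
  | nil => rfl
  | cons a l ih =>
    cases l with
    | nil => rfl
    | cons b l' => simp only [pathEdges_cons_cons, List.length_cons] at ih ⊢; omega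

lemma mem_of_mem_pathEdges {p : List V} {e : Sym2 V} {x : V}
    (he : e ∈ pathEdges p) (hx : x ∈ e) : x ∈ p := by
  induction p with
  | nil => simp at he
  | cons a l ih =>
    cases l with
    | nil => simp at he
    | cons b l' =>
      rw [pathEdges_cons_cons] at he
      rcases List.mem_cons.1 he with h | h
      · subst h
        rcases Sym2.mem_iff.1 hx with h | h <;> simp [h]
      · exact List.mem_cons_of_mem _ (ih h)

lemma pathEdges_nodup {p : List V} (h : p.Nodup) : (pathEdges p).Nodup := by
  induction p with
  | nil => simp
  | cons a l ih =>
    cases l with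
    | nil => simp
    | cons b l' =>
      rw [pathEdges_cons_cons]
      refine List.nodup_cons.2 ⟨?_, ih (List.nodup_cons.1 h).2⟩
      intro hmem
      exact (List.nodup_cons.1 h).1 (mem_of_mem_pathEdges hmem (by simp))

lemma pathEdges_getElem (p : List V) (i : ℕ) (h : i < (pathEdges p).length)
    (h1 : i < p.length) (h2 : i + 1 < p.length) :
    (pathEdges p)[i] = s(p[i], p[i+1]) := by
  induction p generalizing i with
  | nil => simp at h1
  | cons a l ih =>
    cases l with
    | nil => simp at h
    | cons b l' =>
      cases i with
      | zero => simp
      | succ j =>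
        show (s(a,b) :: pathEdges (b :: l'))[j+1] = _
        simp only [List.getElem_cons_succ]
        exact ih j (by simpa [length_pathEdges] using h) (by simpa using Nat.lt_of_succ_lt_succ h1)
          (by simpa using Nat.lt_of_succ_lt_succ h2)

lemma pathEdges_concat (l : List V) (b : V) (a : V) (ha : l.getLast? = some a) :
    pathEdges (l ++ [b]) = pathEdges l ++ [s(a, b)] := by
  induction l with
  | nil => simp at ha
  | cons c l' ih =>
    cases l' with
    | nil =>
      simp only [List.getLast?_singleton, Option.some_inj] at ha
      subst ha; rfl
    | cons d l'' =>
      rw [List.getLast?_cons_cons] at ha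
      have h2 := ih ha
      rw [List.cons_append] at h2
      show pathEdges (c :: d :: (l'' ++ [b])) = _
      rw [pathEdges_cons_cons, h2, pathEdges_cons_cons]
      simp

lemma pathEdges_take (p : List V) (n : ℕ) :
    pathEdges (p.take (n+1)) = (pathEdges p).take n := by
  induction p generalizing n with
  | nil => simp
  | cons a l ih =>
    cases l with
    | nil => simp
    | cons b l' =>
      cases n with
      | zero => simp
      | succ m =>
        show pathEdges (a :: b :: l'.take m) = s(a,b) :: (pathEdges (b::l')).take m
        rw [pathEdges_cons_cons]
        have h2 := ih m
        rw [List.take_succ_cons] at h2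
        rw [h2]

lemma pathEdges_reverse (p : List V) :
    pathEdges p.reverse = (pathEdges p).reverse := by
  induction p with
  | nil => rfl
  | cons a l ih =>
    cases l with
    | nil => rfl
    | cons b l' =>
      rw [List.reverse_cons, pathEdges_concat _ _ b (by simp), ih,
        pathEdges_cons_cons, List.reverse_cons, Sym2.eq_swap]

lemma matching_unique {G : SimpleGraph V} {W : Set (Sym2 V)} (hW : IsMatchingIn G W)
    {e f : Sym2 V} {x : V} (he : e ∈ W) (hf : f ∈ W) (hx : x ∈ e) (hx' : x ∈ f) : e = f := by
  by_contra hne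
  exact hW.2 e he f hf hne x hx hx'

lemma list_getElem_congr {α : Type*} (l : List α) {i j : ℕ} (h : i = j) (hi : i < l.length) :
    l[i] = l[j]'(h ▸ hi) := by subst h; rfl

lemma pathEdges_getLast (p : List V) (hp : 2 ≤ p.length) :
    (pathEdges p).getLast? = some s(p[p.length-2]'(by omega), p[p.length-1]'(by omega)) := by
  have hlen := length_pathEdges p
  rw [List.getLast?_eq_getElem?, List.getElem?_eq_getElem (by omega), Option.some_inj,
    list_getElem_congr (pathEdges p) (show (pathEdges p).length - 1 = p.length - 2 by omega)
      (by omega),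
    pathEdges_getElem p (p.length - 2) (by omega) (by omega) (by omega),
    list_getElem_congr p (show p.length - 2 + 1 = p.length - 1 by omega) (by omega)]

lemma head_mem_first_edge {p : List V} {u : V} (hh : p.head? = some u)
    {e : Sym2 V} (he : (pathEdges p).head? = some e) : u ∈ e := by
  cases p with
  | nil => simp at hh
  | cons a l =>
    cases l with
    | nil => simp at he
    | cons b l' =>
      simp only [pathEdges_cons_cons, List.head?_cons, Option.some_inj] at hh he
      subst hh; rw [← he]; simp

lemma edge_of_getLast {p : List V} (hnd : p.Nodup) {e : Sym2 V} (he : e ∈ pathEdges p)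
    {t : V} (ht : p.getLast? = some t) (hte : t ∈ e) :
    (pathEdges p).getLast? = some e := by
  obtain ⟨j, hj, hje⟩ := List.getElem_of_mem he
  have hlen := length_pathEdges p
  have hj1 : j < p.length := by omega
  have hj2 : j + 1 < p.length := by omega
  have hp2 : 2 ≤ p.length := by omega
  rw [pathEdges_getElem p j hj hj1 hj2] at hje
  have htl : t = p[p.length - 1]'(by omega) := by
    rw [List.getLast?_eq_getElem?, List.getElem?_eq_getElem (by omega)] at ht
    exact (Option.some_inj.1 ht).symm
  subst hje
  rcases Sym2.mem_iff.1 hte with h | h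
  · have : j = p.length - 1 := (hnd.getElem_inj_iff (hi := hj1) (hj := by omega)).1 (h.symm.trans htl)
    omega
  · have hj3 : j + 1 = p.length - 1 := (hnd.getElem_inj_iff (hi := hj2) (hj := by omega)).1 (h.symm.trans htl)
    have hj4 : j = p.length - 2 := by omega
    subst hj4
    rw [pathEdges_getLast p hp2, Option.some_inj,
      list_getElem_congr p (show p.length - 2 + 1 = p.length - 1 by omega) (by omega)]

lemma interior_edges {p : List V} (hnd : p.Nodup) {x : V} (hx : x ∈ p)
    (hh : ¬ p.head? = some x) (hl : ¬ p.getLast? = some x) :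
    ∃ i, ∃ (hi : i + 1 < (pathEdges p).length),
      x ∈ (pathEdges p)[i]'(by omega) ∧ x ∈ (pathEdges p)[i+1] := by
  obtain ⟨k, hk, hkx⟩ := List.getElem_of_mem hx
  have hlen := length_pathEdges p
  have hk0 : k ≠ 0 := by
    rintro rfl
    cases p with
    | nil => simp at hx
    | cons a l => simp_all
  have hkl : k ≠ p.length - 1 := by
    intro hke
    apply hl
    rw [List.getLast?_eq_getElem?, List.getElem?_eq_getElem (by omega), Option.some_inj,
      list_getElem_congr p (show p.length - 1 = k by omega) (by omega), hkx]
  have h1 : k - 1 + 1 < (pathEdges p).length := by omega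
  refine ⟨k - 1, h1, ?_, ?_⟩
  · rw [pathEdges_getElem p (k-1) (by omega) (by omega) (by omega), Sym2.mem_iff]
    right
    rw [← hkx, list_getElem_congr p (show k - 1 + 1 = k by omega) (by omega)]
  · rw [pathEdges_getElem p (k-1+1) (by omega) (by omega) (by omega), Sym2.mem_iff]
    left
    rw [← hkx, list_getElem_congr p (show k - 1 + 1 = k by omega) (by omega)]

lemma isAltPath_singleton (G : SimpleGraph V) (W : Set (Sym2 V)) (v : V) :
    IsAltPath G W v v [v] := by
  refine ⟨by simp [List.Chain'], by simp, by simp [List.Chain'], rfl, rfl⟩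

lemma IsAltPath.extend {G : SimpleGraph V} {W : Set (Sym2 V)} {u x y : V} {p : List V}
    (h : IsAltPath G W u x p) (hadj : G.Adj x y) (hy : y ∉ p)
    (halt : ∀ e ∈ (pathEdges p).getLast?, (e ∈ W ↔ s(x,y) ∉ W)) :
    IsAltPath G W u y (p ++ [y]) := by
  obtain ⟨hc, hnd, hch, hh, hl⟩ := h
  have hpe : pathEdges (p ++ [y]) = pathEdges p ++ [s(x, y)] := pathEdges_concat p y x hl
  refine ⟨?_, ?_, ?_, ?_, ?_⟩
  · refine List.isChain_append.2 ⟨hc, by simp, ?_⟩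
    intro a ha b hb
    rw [hl] at ha
    simp only [List.head?_cons, Option.mem_def, Option.some_inj] at ha hb
    subst ha; subst hb; exact hadj
  · simp [List.nodup_append, hnd, hy]; exact fun a ha h => hy (h ▸ ha)
  · rw [hpe]
    refine List.isChain_append.2 ⟨hch, by simp, ?_⟩
    intro a ha b hb
    simp only [List.head?_cons, Option.mem_def, Option.some_inj] at hb
    subst hb
    exact halt a ha
  · cases p with
    | nil => simp at hh
    | cons a l => simpa using hh
  · simp
lemma IsAltPath.reverse {G : SimpleGraph V} {W : Set (Sym2 V)} {u v : V} {p : List V}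
    (h : IsAltPath G W u v p) : IsAltPath G W v u p.reverse := by
  obtain ⟨hc, hnd, hch, hh, hl⟩ := h
  refine ⟨?_, by simpa using hnd, ?_, ?_, ?_⟩
  · exact List.isChain_reverse.2 (hc.imp fun a b hab => hab.symm)
  · rw [pathEdges_reverse]
    refine List.isChain_reverse.2 (hch.imp fun a b hab => ?_)
    show b ∈ W ↔ a ∉ W
    tauto
  · rw [List.head?_reverse]; exact hl
  · rw [List.getLast?_reverse]; exact hh

lemma IsAltPath.reach_of_mem {G : SimpleGraph V} {W : Set (Sym2 V)} {u z x : V} {p : List V}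
    (h : IsAltPath G W u z p) (hx : x ∈ p) : ∃ q, IsAltPath G W u x q := by
  obtain ⟨hc, hnd, hch, hh, hl⟩ := h
  obtain ⟨k, hk, hkx⟩ := List.getElem_of_mem hx
  refine ⟨p.take (k+1), ?_, ?_, ?_, ?_, ?_⟩
  · exact hc.prefix (List.take_prefix _ _)
  · exact (List.take_sublist _ _).nodup hnd
  · rw [pathEdges_take]
    exact hch.prefix (List.take_prefix _ _)
  · cases p with
    | nil => simp at hh
    | cons a l => simpa using hh
  · rw [List.getLast?_eq_getElem?]
    have hlen : (p.take (k+1)).length = k + 1 := by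
      rw [List.length_take]; omega
    rw [List.getElem?_eq_getElem (by omega)]
    simp only [hlen, Nat.add_sub_cancel, List.getElem_take]
    rw [hkx]

lemma ncard_list_set {l : List (Sym2 V)} (h : l.Nodup) : {e | e ∈ l}.ncard = l.length := by
  induction l with
  | nil => simp
  | cons a l ih =>
    have hs : {e : Sym2 V | e ∈ a :: l} = insert a {e | e ∈ l} := Set.ext fun e => by simp
    rw [hs, Set.ncard_insert_of_notMem (by simpa using (List.nodup_cons.1 h).1)
      (Set.Finite.subset l.finite_toSet fun e he => he), ih (List.nodup_cons.1 h).2]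
    simp

lemma alt_count (W : Set (Sym2 V)) : ∀ (es : List (Sym2 V)), es.Nodup →
    es.Chain' (fun e f => e ∈ W ↔ f ∉ W) →
    ∀ e₀ ∈ es.head?, ∀ eL ∈ es.getLast?,
      ((e₀ ∉ W) → (eL ∉ W) → 2 * {e | e ∈ es ∧ e ∈ W}.ncard + 1 = es.length) ∧
      ((e₀ ∉ W) → (eL ∈ W) → 2 * {e | e ∈ es ∧ e ∈ W}.ncard = es.length) ∧
      ((e₀ ∈ W) → (eL ∉ W) → 2 * {e | e ∈ es ∧ e ∈ W}.ncard = es.length) ∧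
      ((e₀ ∈ W) → (eL ∈ W) → 2 * {e | e ∈ es ∧ e ∈ W}.ncard = es.length + 1) := by
  intro es
  induction es with
  | nil => intro _ _ e₀ h0; simp at h0
  | cons x rest ih =>
    intro hnd hch e₀ h0 eL hL
    simp only [List.head?_cons, Option.mem_def, Option.some_inj] at h0
    subst h0
    have hfin : {e | e ∈ rest ∧ e ∈ W}.Finite :=
      Set.Finite.subset rest.finite_toSet fun e he => he.1
    by_cases hx : x ∈ W
    · have hset : {e | e ∈ x :: rest ∧ e ∈ W} = insert x {e | e ∈ rest ∧ e ∈ W} :=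
        Set.ext fun e => by
          simp only [List.mem_cons, Set.mem_setOf_eq, Set.mem_insert_iff]
          constructor
          · rintro ⟨h | h, hw⟩
            · exact Or.inl h
            · exact Or.inr ⟨h, hw⟩
          · rintro (rfl | ⟨h, hw⟩)
            · exact ⟨Or.inl rfl, hx⟩
            · exact ⟨Or.inr h, hw⟩
      have hxn : x ∉ {e | e ∈ rest ∧ e ∈ W} := fun h => (List.nodup_cons.1 hnd).1 h.1
      rw [hset, Set.ncard_insert_of_notMem hxn hfin]
      cases rest with
      | nil =>
        simp only [List.getLast?_singleton, Option.mem_def, Option.some_inj] at hL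
        subst hL
        refine ⟨fun h => absurd hx h, fun h => absurd hx h, fun _ h => absurd hx h, fun _ _ => ?_⟩
        simp [Set.ncard_empty, show {e : Sym2 V | e ∈ ([] : List (Sym2 V)) ∧ e ∈ W} = ∅ by simp]
      | cons y rest' =>
        have hch2 := (List.isChain_cons_cons.1 hch)
        have hy : y ∉ W := by have := hch2.1; tauto
        have hLr : eL ∈ (y :: rest').getLast? := by
          rw [List.getLast?_cons_cons] at hL; exact hL
        have := ih (List.nodup_cons.1 hnd).2 hch2.2 y rfl eL hLr
        refine ⟨fun h => absurd hx h, fun h => absurd hx h, fun _ hL' => ?_, fun _ hL' => ?_⟩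
        · have := this.1 hy hL'
          simp only [List.length_cons] at this ⊢
          omega
        · have := this.2.1 hy hL'
          simp only [List.length_cons] at this ⊢
          omega
    · have hset : {e | e ∈ x :: rest ∧ e ∈ W} = {e | e ∈ rest ∧ e ∈ W} :=
        Set.ext fun e => by
          simp only [List.mem_cons, Set.mem_setOf_eq]
          constructor
          · rintro ⟨h | h, hw⟩
            · exact absurd (h ▸ hw) hx
            · exact ⟨h, hw⟩
          · rintro ⟨h, hw⟩; exact ⟨Or.inr h, hw⟩
      rw [hset]
      cases rest with
      | nil =>
        simp only [List.getLast?_singleton, Option.mem_def, Option.some_inj] at hL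
        subst hL
        refine ⟨fun _ _ => ?_, fun _ h => absurd h hx, fun h => absurd h hx, fun h => absurd h hx⟩
        simp [show {e : Sym2 V | e ∈ ([] : List (Sym2 V)) ∧ e ∈ W} = ∅ by simp]
      | cons y rest' =>
        have hch2 := (List.isChain_cons_cons.1 hch)
        have hy : y ∈ W := by have := hch2.1; tauto
        have hLr : eL ∈ (y :: rest').getLast? := by
          rw [List.getLast?_cons_cons] at hL; exact hL
        have := ih (List.nodup_cons.1 hnd).2 hch2.2 y rfl eL hLr
        refine ⟨fun _ hL' => ?_, fun _ hL' => ?_, fun h => absurd h hx, fun h => absurd h hx⟩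
        · have := this.2.2.1 hy hL'
          simp only [List.length_cons] at this ⊢
          omega
        · have := this.2.2.2 hy hL'
          simp only [List.length_cons] at this ⊢
          omega

lemma pathEdges_mem_edgeSet {G : SimpleGraph V} {p : List V} (hc : p.Chain' G.Adj)
    {e : Sym2 V} (he : e ∈ pathEdges p) : e ∈ G.edgeSet := by
  obtain ⟨j, hj, rfl⟩ := List.getElem_of_mem he
  have hlen := length_pathEdges p
  rw [pathEdges_getElem p j hj (by omega) (by omega)]
  rw [SimpleGraph.mem_edgeSet]
  have := List.isChain_iff_getElem.1 hc j (by omega)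
  simpa using this

lemma getLast_mem_getLast_edge {p : List V} {v : V} (hl : p.getLast? = some v)
    {d : Sym2 V} (hd : (pathEdges p).getLast? = some d) : v ∈ d := by
  have hne : pathEdges p ≠ [] := by intro h; rw [h] at hd; simp at hd
  have hp2 : 2 ≤ p.length := by
    have := length_pathEdges p
    have : (pathEdges p).length ≠ 0 := fun h => hne (List.length_eq_zero_iff.1 h)
    omega
  rw [pathEdges_getLast p hp2] at hd
  have hv : v = p[p.length - 1]'(by omega) := by
    rw [List.getLast?_eq_getElem?, List.getElem?_eq_getElem (by omega)] at hl
    exact (Option.some_inj.1 hl).symm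
  rw [← Option.some_inj.1 hd, hv]
  simp

lemma shared_vertex_consecutive {P : List V} (hnd : P.Nodup) {i j : ℕ}
    (hi : i < (pathEdges P).length) (hj : j < (pathEdges P).length) (hij : i ≠ j)
    {x : V} (hxi : x ∈ (pathEdges P)[i]) (hxj : x ∈ (pathEdges P)[j]) :
    j = i + 1 ∨ i = j + 1 := by
  have hlen := length_pathEdges P
  rw [pathEdges_getElem P i hi (by omega) (by omega), Sym2.mem_iff] at hxi
  rw [pathEdges_getElem P j hj (by omega) (by omega), Sym2.mem_iff] at hxj
  rcases hxi with h1 | h1 <;> rcases hxj with h2 | h2 <;>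
    [(have := (hnd.getElem_inj_iff (hi := by omega) (hj := by omega)).1 (h1.symm.trans h2));
     (have := (hnd.getElem_inj_iff (hi := by omega) (hj := by omega)).1 (h1.symm.trans h2));
     (have := (hnd.getElem_inj_iff (hi := by omega) (hj := by omega)).1 (h1.symm.trans h2));
     (have := (hnd.getElem_inj_iff (hi := by omega) (hj := by omega)).1 (h1.symm.trans h2))] <;>
    omega

lemma flip_matching {G : SimpleGraph V} {W : Set (Sym2 V)} (hW : IsMatchingIn G W)
    {u v : V} {P : List V} (hP : IsAltPath G W u v P) (hu : ¬ IsMatchedBy W u)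
    (hend : (∀ e ∈ (pathEdges P).getLast?, e ∈ W) ∨ ¬ IsMatchedBy W v) :
    IsMatchingIn G ((W \ {e | e ∈ pathEdges P}) ∪ ({e | e ∈ pathEdges P} \ W)) := by
  obtain ⟨hc, hnd, hch, hh, hl⟩ := hP
  have claimA : ∀ f ∈ W, f ∉ pathEdges P → ∀ e ∈ pathEdges P, ∀ x, x ∈ f → x ∈ e → False := by
    intro f hf hfP e heP x hxf hxe
    have hxP := mem_of_mem_pathEdges heP hxe
    by_cases hxh : P.head? = some x
    · rw [hh, Option.some_inj] at hxh
      exact hu ⟨f, hf, hxh ▸ hxf⟩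
    by_cases hxl : P.getLast? = some x
    · have hvx : v = x := Option.some_inj.1 (hl.symm.trans hxl)
      rcases hend with hend | hend
      · have hpe : pathEdges P ≠ [] := List.ne_nil_of_mem heP
        have hd := List.getLast?_eq_getLast hpe
        have hdW := hend _ hd
        have hdv : x ∈ (pathEdges P).getLast hpe := by
          rw [← hvx]; exact getLast_mem_getLast_edge hl hd
        have := matching_unique hW hf hdW hxf hdv
        exact hfP (this ▸ List.getLast_mem hpe)
      · exact hend ⟨f, hf, by rw [hvx]; exact hxf⟩
    · obtain ⟨i, hi, hx1, hx2⟩ := interior_edges hnd hxP hxh hxl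
      have halt := List.isChain_iff_getElem.1 hch i (by omega)
      by_cases hiw : (pathEdges P)[i]'(by omega) ∈ W
      · have := matching_unique hW hf hiw hxf hx1
        exact hfP (by rw [this]; exact List.getElem_mem (by omega))
      · have h2w : (pathEdges P)[i+1] ∈ W := by tauto
        have := matching_unique hW hf h2w hxf hx2
        exact hfP (by rw [this]; exact List.getElem_mem hi)
  constructor
  · rintro e (⟨he, -⟩ | ⟨he, -⟩)
    · exact hW.1 he
    · exact pathEdges_mem_edgeSet hc he
  · rintro e (⟨heW, heF⟩ | ⟨heF, heW⟩) f (⟨hfW, hfF⟩ | ⟨hfF, hfW⟩) hne x hxe hxf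
    · exact hW.2 e heW f hfW hne x hxe hxf
    · exact claimA e heW heF f hfF x hxe hxf
    · exact claimA f hfW hfF e heF x hxf hxe
    · obtain ⟨i, hi, hie⟩ := List.getElem_of_mem heF
      obtain ⟨j, hj, hjf⟩ := List.getElem_of_mem hfF
      have hij : i ≠ j := by
        intro h
        apply hne
        rw [← hie, ← hjf]
        exact list_getElem_congr _ h hi
      have hcons := shared_vertex_consecutive hnd hi hj hij
        (by rw [hie]; exact hxe) (by rw [hjf]; exact hxf)
      rcases hcons with h | h
      · have halt := List.isChain_iff_getElem.1 hch i (by omega)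
        have e2 : (pathEdges P)[i+1]'(by omega) = f := by
          rw [list_getElem_congr (pathEdges P) (show i+1 = j from h.symm) (by omega)]
          exact hjf
        rw [hie, e2] at halt
        tauto
      · have halt := List.isChain_iff_getElem.1 hch j (by omega)
        have e2 : (pathEdges P)[j+1]'(by omega) = e := by
          rw [list_getElem_congr (pathEdges P) (show j+1 = i from h.symm) (by omega)]
          exact hie
        rw [hjf, e2] at halt
        tauto

lemma singleton_of_pathEdges_nil {p : List V} {u v : V} (hh : p.head? = some u)
    (hl : p.getLast? = some v) (hpe : pathEdges p = []) : u = v := by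
  cases p with
  | nil => simp at hh
  | cons a l =>
    cases l with
    | nil =>
      simp only [List.head?_cons, Option.some_inj] at hh
      have hl2 : a = v := by simpa using hl
      rw [← hh, ← hl2]
    | cons b l' => exact absurd hpe (List.cons_ne_nil _ _)

lemma flip_card {W : Set (Sym2 V)} {P : List V} (hndP : P.Nodup)
    (hWfin : W.Finite) :
    ∀ a, {e | e ∈ pathEdges P ∧ e ∈ W}.ncard = a →
    ((W \ {e | e ∈ pathEdges P}) ∪ ({e | e ∈ pathEdges P} \ W)).ncard
      = W.ncard - a + ((pathEdges P).length - a) := by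
  intro a ha
  set F : Set (Sym2 V) := {e | e ∈ pathEdges P} with hF
  have hFfin : F.Finite := (pathEdges P).finite_toSet
  have hA : {e | e ∈ pathEdges P ∧ e ∈ W} = F ∩ W := rfl
  have hWd : W \ F = W \ (F ∩ W) := by
    ext e; simp only [Set.mem_diff, Set.mem_inter_iff]; tauto
  have hsplit : F = (F ∩ W) ∪ (F \ W) := by
    ext e; simp only [Set.mem_union, Set.mem_inter_iff, Set.mem_diff]; tauto
  have hFcard : F.ncard = (pathEdges P).length := ncard_list_set (pathEdges_nodup hndP)
  have hBcard : (F \ W).ncard = (pathEdges P).length - a := by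
    have hdisj : Disjoint (F ∩ W) (F \ W) := by
      rw [Set.disjoint_left]; rintro e ⟨-, h⟩ ⟨-, h'⟩; exact h' h
    have := Set.ncard_union_eq hdisj (hFfin.subset Set.inter_subset_left)
      (hFfin.subset Set.diff_subset)
    rw [← hsplit, hFcard] at this
    rw [hA] at ha
    omega
  have hWFcard : (W \ F).ncard = W.ncard - a := by
    rw [hWd, Set.ncard_diff Set.inter_subset_right (hWfin.subset Set.inter_subset_right)]
    rw [hA] at ha
    rw [ha]
  have hdisj2 : Disjoint (W \ F) (F \ W) := by
    rw [Set.disjoint_left]; rintro e ⟨h, -⟩ ⟨-, h'⟩; exact h' h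
  rw [Set.ncard_union_eq hdisj2 (hWfin.subset Set.diff_subset) (hFfin.subset Set.diff_subset),
    hWFcard, hBcard]

lemma head?_some_of_ne_nil {α : Type*} {l : List α} (h : l ≠ []) : ∃ a, l.head? = some a := by
  cases l with
  | nil => exact absurd rfl h
  | cons a l => exact ⟨a, rfl⟩

lemma flip_even [Fintype V] {G : SimpleGraph V} {W : Set (Sym2 V)} (hW : IsMatchingIn G W)
    {u v : V} {P : List V} (hP : IsAltPath G W u v P) (hu : ¬ IsMatchedBy W u)
    (hlast : ∀ e ∈ (pathEdges P).getLast?, e ∈ W) :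
    ∃ W', IsMatchingIn G W' ∧ W'.ncard = W.ncard ∧ ¬ IsMatchedBy W' v := by
  obtain ⟨hc, hnd, hch, hh, hl⟩ := hP
  refine ⟨_, flip_matching hW ⟨hc, hnd, hch, hh, hl⟩ hu (Or.inl hlast), ?_, ?_⟩
  · by_cases hpe : pathEdges P = []
    · rw [show {e | e ∈ pathEdges P} = (∅ : Set (Sym2 V)) by rw [hpe]; simp]
      simp
    · obtain ⟨e₀, h0⟩ := head?_some_of_ne_nil hpe
      have h0M : e₀ ∉ W := fun hmem => hu ⟨e₀, hmem, head_mem_first_edge hh h0⟩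
      have hdL := List.getLast?_eq_getLast hpe
      have hLW := hlast _ hdL
      have hcnt := (alt_count W (pathEdges P) (pathEdges_nodup hnd) hch e₀ h0 _ hdL).2.1 h0M hLW
      have hle : {e | e ∈ pathEdges P ∧ e ∈ W}.ncard ≤ W.ncard :=
        Set.ncard_le_ncard (fun e he => he.2) (Set.toFinite W)
      rw [flip_card hnd (Set.toFinite W) _ rfl]
      omega
  · rintro ⟨e, he, hv⟩
    rcases he with ⟨heW, heF⟩ | ⟨heF, heW⟩
    · have hpe : pathEdges P ≠ [] := by
        intro h
        have huv := singleton_of_pathEdges_nil hh hl h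
        exact hu ⟨e, heW, by rw [huv]; exact hv⟩
      have hd := List.getLast?_eq_getLast hpe
      have hdW := hlast _ hd
      have hdv : v ∈ (pathEdges P).getLast hpe := getLast_mem_getLast_edge hl hd
      have := matching_unique hW heW hdW hv hdv
      exact heF (this ▸ List.getLast_mem hpe)
    · exact heW (hlast e (edge_of_getLast hnd heF hl hv))

lemma flip_augment [Fintype V] {G : SimpleGraph V} {W : Set (Sym2 V)} (hW : IsMatchingIn G W)
    {u v : V} {P : List V} (hP : IsAltPath G W u v P) (hu : ¬ IsMatchedBy W u)
    (hv : ¬ IsMatchedBy W v) (hne : pathEdges P ≠ [])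
    (hlastn : ∀ e ∈ (pathEdges P).getLast?, e ∉ W) :
    ∃ W', IsMatchingIn G W' ∧ W'.ncard = W.ncard + 1 := by
  obtain ⟨hc, hnd, hch, hh, hl⟩ := hP
  refine ⟨_, flip_matching hW ⟨hc, hnd, hch, hh, hl⟩ hu (Or.inr hv), ?_⟩
  obtain ⟨e₀, h0⟩ := head?_some_of_ne_nil hne
  have h0M : e₀ ∉ W := fun hmem => hu ⟨e₀, hmem, head_mem_first_edge hh h0⟩
  have hdL := List.getLast?_eq_getLast hne
  have hLW := hlastn _ hdL
  have hcnt := (alt_count W (pathEdges P) (pathEdges_nodup hnd) hch e₀ h0 _ hdL).1 h0M hLW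
  have hle : {e | e ∈ pathEdges P ∧ e ∈ W}.ncard ≤ W.ncard :=
    Set.ncard_le_ncard (fun e he => he.2) (Set.toFinite W)
  rw [flip_card hnd (Set.toFinite W) _ rfl]
  omega


lemma even_missed [Fintype V] {G : SimpleGraph V} {M : Set (Sym2 V)} {x : V}
    (hM : IsMaxMatching G M) (hx : EvenVtx G M x) :
    ∃ M', IsMaxMatching G M' ∧ ¬ IsMatchedBy M' x := by
  obtain ⟨u, p, hu, hp, heven⟩ := hx
  have hlast : ∀ e ∈ (pathEdges p).getLast?, e ∈ M := by
    intro e he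
    by_contra heM
    have hpe : pathEdges p ≠ [] := by
      intro h; rw [h] at he; simp at he
    obtain ⟨e₀, h0⟩ := head?_some_of_ne_nil hpe
    have h0M : e₀ ∉ M := fun hmem => hu ⟨e₀, hmem, head_mem_first_edge hp.2.2.2.1 h0⟩
    have hcnt := (alt_count M (pathEdges p) (pathEdges_nodup hp.2.1) hp.2.2.1 e₀ h0 e he).1
      h0M heM
    obtain ⟨r, hr⟩ := heven
    omega
  obtain ⟨M', hM', hcard, hmiss⟩ := flip_even hM.1 hp hu hlast
  exact ⟨M', ⟨hM', fun N hN => hcard ▸ hM.2 N hN⟩, hmiss⟩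


lemma mem_of_getLast?' {α : Type*} {l : List α} {a : α} (h : l.getLast? = some a) : a ∈ l := by
  have hne : l ≠ [] := by intro hh; rw [hh] at h; simp at h
  rw [List.getLast?_eq_getLast hne, Option.some_inj] at h
  exact h ▸ List.getLast_mem hne

lemma mem_of_head? {α : Type*} {l : List α} {a : α} (h : l.head? = some a) : a ∈ l := by
  cases l with
  | nil => simp at h
  | cons b l => simp at h; simp [h]

lemma head?_append_left {α : Type*} (l1 l2 : List α) (h : l1 ≠ []) :
    (l1 ++ l2).head? = l1.head? := by
  cases l1 with
  | nil => exact absurd rfl h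
  | cons a l => rfl

def GoodWalk (G : SimpleGraph V) (W Z : Set (Sym2 V)) (v : V) (P : List V) : Prop :=
  P.head? = some v ∧ P.Chain' G.Adj ∧ P.Nodup ∧
  (pathEdges P).Chain' (fun e f => e ∈ W ↔ f ∉ W) ∧
  (∀ e ∈ pathEdges P, (e ∈ W ∧ e ∉ Z) ∨ (e ∈ Z ∧ e ∉ W)) ∧
  (∀ e, (pathEdges P).head? = some e → e ∈ W)

lemma even_of_unmatched [Fintype V] {G : SimpleGraph V} {W Z : Set (Sym2 V)}
    (hW : IsMatchingIn G W) (hZ : IsMaxMatching G Z) {v : V} (hv : ¬ IsMatchedBy Z v) :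
    EvenVtx G W v := by
  by_cases hvW : IsMatchedBy W v
  swap
  · exact ⟨v, [v], hvW, isAltPath_singleton G W v, by rw [pathEdges_singleton]; simp⟩
  by_contra hgoal
  suffices hext : ∀ P, GoodWalk G W Z v P → ∃ Q, GoodWalk G W Z v Q ∧ Q.length = P.length + 1 by
    have hsingle : GoodWalk G W Z v [v] :=
      ⟨rfl, by simp [List.Chain'], by simp, by rw [pathEdges_singleton]; simp [List.Chain'],
        by rw [pathEdges_singleton]; simp, by rw [pathEdges_singleton]; simp⟩
    have hall : ∀ k, ∃ P, GoodWalk G W Z v P ∧ k ≤ P.length := by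
      intro k
      induction k with
      | zero => exact ⟨[v], hsingle, by simp⟩
      | succ n ih =>
        obtain ⟨P, hP, hn⟩ := ih
        obtain ⟨Q, hQ, hlen⟩ := hext P hP
        exact ⟨Q, hQ, by omega⟩
    obtain ⟨P, hP, hk⟩ := hall (Fintype.card V + 1)
    have := hP.2.2.1.length_le_card
    omega
  intro P hP
  obtain ⟨hhd, hc, hnd, hch, hWZ, hfst⟩ := hP
  have hPne : P ≠ [] := fun h => by rw [h] at hhd; simp at hhd
  obtain ⟨t, hlt⟩ : ∃ t, P.getLast? = some t := ⟨_, List.getLast?_eq_getLast hPne⟩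
  have hPW : IsAltPath G W v t P := ⟨hc, hnd, hch, hhd, hlt⟩
  by_cases hpe : pathEdges P = []
  · -- P = [v]; extend with the W-edge of v
    have hPv : P = [v] := by
      cases P with
      | nil => exact absurd rfl hPne
      | cons a l =>
        cases l with
        | nil => simp only [List.head?_cons, Option.some_inj] at hhd; rw [hhd]
        | cons b l' => exact absurd hpe (List.cons_ne_nil _ _)
    obtain ⟨e, heW, hve⟩ := hvW
    have heZ : e ∉ Z := fun h => hv ⟨e, h, hve⟩
    obtain ⟨y, rfl⟩ := Sym2.mem_iff_exists.1 hve
    have hadj : G.Adj v y := (SimpleGraph.mem_edgeSet G).1 (hW.1 heW)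
    refine ⟨[v, y], ⟨rfl, ?_, ?_, ?_, ?_, ?_⟩, by rw [hPv]; rfl⟩
    · exact List.isChain_pair.2 hadj
    · simp [hadj.ne]
    · show (pathEdges [v, y]).Chain' _
      have : pathEdges [v, y] = [s(v, y)] := rfl
      rw [this]
      simp [List.Chain']
    · intro f hf
      have : pathEdges [v, y] = [s(v, y)] := rfl
      rw [this] at hf
      simp only [List.mem_singleton] at hf
      subst hf
      exact Or.inl ⟨heW, heZ⟩
    · intro f hf
      have : pathEdges [v, y] = [s(v, y)] := rfl
      rw [this] at hf
      simp only [List.head?_cons, Option.some_inj] at hf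
      subst hf
      exact heW
  · obtain ⟨e₀, h0⟩ := head?_some_of_ne_nil hpe
    have h0W : e₀ ∈ W := hfst e₀ h0
    have h0P : e₀ ∈ pathEdges P := mem_of_head? h0
    have hdL := List.getLast?_eq_getLast hpe
    set d := (pathEdges P).getLast hpe with hdd
    have hdP : d ∈ pathEdges P := List.getLast_mem hpe
    have htd : t ∈ d := getLast_mem_getLast_edge hlt hdL
    have hchZ : (pathEdges P).Chain' (fun e f => e ∈ Z ↔ f ∉ Z) := by
      apply List.isChain_iff_getElem.2
      intro i hi
      have h1 := List.isChain_iff_getElem.1 hch i hi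
      have m1 := hWZ _ (List.getElem_mem (show i < (pathEdges P).length by omega))
      have m2 := hWZ _ (List.getElem_mem (show i + 1 < (pathEdges P).length by omega))
      tauto
    rcases hWZ d hdP with ⟨hdW, hdZ⟩ | ⟨hdZ, hdW⟩
    · -- last edge in W \ Z
      by_cases htZ : IsMatchedBy Z t
      · obtain ⟨f, hfZ, htf⟩ := htZ
        have hfd : f ≠ d := fun h => hdZ (h ▸ hfZ)
        have hfW : f ∉ W := by
          intro hfW
          exact hfd (matching_unique hW hfW hdW htf htd)
        obtain ⟨y, rfl⟩ := Sym2.mem_iff_exists.1 htf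
        have hadj : G.Adj t y := (SimpleGraph.mem_edgeSet G).1 (hZ.1.1 hfZ)
        by_cases hyP : y ∈ P
        · exfalso
          by_cases hyh : P.head? = some y
          · have hyv : v = y := Option.some_inj.1 (hhd.symm.trans hyh)
            exact hv ⟨s(t,y), hfZ, by rw [hyv]; simp⟩
          by_cases hyl : P.getLast? = some y
          · have hyt : t = y := Option.some_inj.1 (hlt.symm.trans hyl)
            exact hadj.ne hyt
          · obtain ⟨i, hi, hm1, hm2⟩ := interior_edges hnd hyP hyh hyl
            have halt := List.isChain_iff_getElem.1 hch i (by omega)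
            have hg : ∃ g ∈ pathEdges P, y ∈ g ∧ g ∈ Z := by
              by_cases hiw : (pathEdges P)[i]'(by omega) ∈ W
              · have h2 : (pathEdges P)[i+1] ∉ W := by tauto
                rcases hWZ _ (List.getElem_mem hi) with ⟨h3, _⟩ | ⟨h3, _⟩
                · exact absurd h3 h2
                · exact ⟨_, List.getElem_mem hi, hm2, h3⟩
              · rcases hWZ _ (List.getElem_mem (show i < (pathEdges P).length by omega))
                  with ⟨h3, _⟩ | ⟨h3, _⟩
                · exact absurd h3 hiw
                · exact ⟨_, List.getElem_mem (show i < (pathEdges P).length by omega), hm1, h3⟩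
            obtain ⟨g, hgP, hyg, hgZ⟩ := hg
            have : s(t,y) = g := matching_unique hZ.1 hfZ hgZ (by simp) hyg
            have hfP : s(t,y) ∈ pathEdges P := this ▸ hgP
            have := edge_of_getLast hnd hfP hlt (by simp)
            rw [hdL] at this
            exact hfd (Option.some_inj.1 this).symm
        · -- extend by the Z-edge
          have hext := hPW.extend hadj hyP (by
            intro g hg
            rw [hdL] at hg
            have : g = d := Option.some_inj.1 hg.symm ▸ rfl
            rw [Option.mem_def, Option.some_inj] at hg
            rw [← hg]
            constructor
            · intro _; exact hfW
            · intro _; exact hdW)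
          obtain ⟨hc', hnd', hch', hhd', hlt'⟩ := hext
          refine ⟨P ++ [y], ⟨hhd', hc', hnd', hch', ?_, ?_⟩, by simp⟩
          · intro g hg
            rw [pathEdges_concat P y t hlt] at hg
            rcases List.mem_append.1 hg with hg | hg
            · exact hWZ g hg
            · simp only [List.mem_singleton] at hg
              subst hg
              exact Or.inr ⟨hfZ, hfW⟩
          · intro g hg
            rw [pathEdges_concat P y t hlt, head?_append_left _ _ hpe, h0] at hg
            rw [← Option.some_inj.1 hg]
            exact h0W
      · -- t unmatched by Z : augmenting path for Z, contradiction
        exfalso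
        have hPZ : IsAltPath G Z v t P := ⟨hc, hnd, hchZ, hhd, hlt⟩
        have hlastn : ∀ e ∈ (pathEdges P).getLast?, e ∉ Z := by
          intro e he
          rw [hdL, Option.mem_def, Option.some_inj] at he
          rw [← he]
          exact hdZ
        obtain ⟨Z', hZ', hcard⟩ := flip_augment hZ.1 hPZ hv htZ hpe hlastn
        have := hZ.2 Z' hZ'
        omega
    · -- last edge in Z \ W
      by_cases htW : IsMatchedBy W t
      · obtain ⟨e, heW, hte⟩ := htW
        have hed : e ≠ d := fun h => hdW (h ▸ heW)
        have heZ : e ∉ Z := by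
          intro heZ
          exact hed (matching_unique hZ.1 heZ hdZ hte htd)
        obtain ⟨y, rfl⟩ := Sym2.mem_iff_exists.1 hte
        have hadj : G.Adj t y := (SimpleGraph.mem_edgeSet G).1 (hW.1 heW)
        by_cases hyP : y ∈ P
        · exfalso
          by_cases hyh : P.head? = some y
          · have hyv : v = y := Option.some_inj.1 (hhd.symm.trans hyh)
            have h0v : v ∈ e₀ := head_mem_first_edge hhd h0
            have : s(t,y) = e₀ := matching_unique hW heW h0W (by rw [hyv]; simp) h0v
            have hfP : s(t,y) ∈ pathEdges P := this ▸ h0P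
            have := edge_of_getLast hnd hfP hlt (by simp)
            rw [hdL] at this
            have : s(t,y) = d := (Option.some_inj.1 this).symm
            exact hdW (this ▸ heW)
          by_cases hyl : P.getLast? = some y
          · have hyt : t = y := Option.some_inj.1 (hlt.symm.trans hyl)
            exact hadj.ne hyt
          · obtain ⟨i, hi, hm1, hm2⟩ := interior_edges hnd hyP hyh hyl
            have halt := List.isChain_iff_getElem.1 hch i (by omega)
            have hg : ∃ g ∈ pathEdges P, y ∈ g ∧ g ∈ W := by
              by_cases hiw : (pathEdges P)[i]'(by omega) ∈ W
              · exact ⟨_, List.getElem_mem (show i < (pathEdges P).length by omega), hm1, hiw⟩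
              · have h2 : (pathEdges P)[i+1] ∈ W := by tauto
                exact ⟨_, List.getElem_mem hi, hm2, h2⟩
            obtain ⟨g, hgP, hyg, hgW⟩ := hg
            have : s(t,y) = g := matching_unique hW heW hgW (by simp) hyg
            have hfP : s(t,y) ∈ pathEdges P := this ▸ hgP
            have := edge_of_getLast hnd hfP hlt (by simp)
            rw [hdL] at this
            have : s(t,y) = d := (Option.some_inj.1 this).symm
            exact hdW (this ▸ heW)
        · -- extend by the W-edge
          have hext := hPW.extend hadj hyP (by
            intro g hg
            rw [hdL, Option.mem_def, Option.some_inj] at hg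
            rw [← hg]
            constructor
            · intro h; exact absurd h hdW
            · intro h; exact absurd heW h)
          obtain ⟨hc', hnd', hch', hhd', hlt'⟩ := hext
          refine ⟨P ++ [y], ⟨hhd', hc', hnd', hch', ?_, ?_⟩, by simp⟩
          · intro g hg
            rw [pathEdges_concat P y t hlt] at hg
            rcases List.mem_append.1 hg with hg | hg
            · exact hWZ g hg
            · simp only [List.mem_singleton] at hg
              subst hg
              exact Or.inl ⟨heW, heZ⟩
          · intro g hg
            rw [pathEdges_concat P y t hlt, head?_append_left _ _ hpe, h0] at hg
            rw [← Option.some_inj.1 hg]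
            exact h0W
      · -- t unmatched by W : reversed path shows v is even, contradiction with hgoal
        exfalso
        apply hgoal
        have hrev := hPW.reverse
        refine ⟨t, P.reverse, htW, hrev, ?_⟩
        rw [pathEdges_reverse, List.length_reverse]
        have hchQ : (pathEdges P).Chain' (fun e f => (e ∈ Wᶜ) ↔ f ∉ Wᶜ) :=
          hch.imp fun a b hab => by simp only [Set.mem_compl_iff]; tauto
        have h0Q : e₀ ∉ Wᶜ := by simp only [Set.mem_compl_iff, not_not]; exact h0W
        have hLQ : d ∈ Wᶜ := hdW
        have hcnt := (alt_count Wᶜ (pathEdges P) (pathEdges_nodup hnd) hchQ e₀ h0 d hdL).2.1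
          h0Q hLQ
        exact ⟨{e | e ∈ pathEdges P ∧ e ∈ Wᶜ}.ncard, by omega⟩


lemma even_trans [Fintype V] {G : SimpleGraph V} {M N : Set (Sym2 V)}
    (hM : IsMaxMatching G M) (hN : IsMaxMatching G N) {y : V} (hy : EvenVtx G M y) :
    EvenVtx G N y := by
  obtain ⟨M', hM', hmiss⟩ := even_missed hM hy
  exact even_of_unmatched hN.1 hM' hmiss

lemma reach_of_reach [Fintype V] {G : SimpleGraph V} {M N : Set (Sym2 V)}
    (hM : IsMaxMatching G M) (hN : IsMaxMatching G N) {x : V}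
    (hx : ∃ u p, ¬ IsMatchedBy M u ∧ IsAltPath G M u x p) :
    ∃ u p, ¬ IsMatchedBy N u ∧ IsAltPath G N u x p := by
  obtain ⟨u, p, hu, hp⟩ := hx
  rcases Nat.even_or_odd (pathEdges p).length with he | ho
  · obtain ⟨u', q, hu', hq, -⟩ := even_trans hM hN ⟨u, p, hu, hp, he⟩
    exact ⟨u', q, hu', hq⟩
  by_cases hxM : IsMatchedBy M x
  swap
  · obtain ⟨u', q, hu', hq, -⟩ :=
      even_trans hM hN ⟨x, [x], hxM, isAltPath_singleton G M x,
        by rw [pathEdges_singleton]; simp⟩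
    exact ⟨u', q, hu', hq⟩
  obtain ⟨hc, hnd, hch, hh, hl⟩ := hp
  have hp : IsAltPath G M u x p := ⟨hc, hnd, hch, hh, hl⟩
  obtain ⟨e, heM, hxe⟩ := hxM
  obtain ⟨x', rfl⟩ := Sym2.mem_iff_exists.1 hxe
  have hadj : G.Adj x x' := (SimpleGraph.mem_edgeSet G).1 (hM.1.1 heM)
  have hpe : pathEdges p ≠ [] := by
    intro h
    rw [h] at ho
    simp [Nat.odd_iff] at ho
  obtain ⟨e₀, h0⟩ := head?_some_of_ne_nil hpe
  have h0M : e₀ ∉ M := fun hm => hu ⟨e₀, hm, head_mem_first_edge hh h0⟩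
  have h0P : e₀ ∈ pathEdges p := mem_of_head? h0
  have hdL := List.getLast?_eq_getLast hpe
  set d := (pathEdges p).getLast hpe with hdd
  have hdM : d ∉ M := by
    intro hdM
    have := (alt_count M (pathEdges p) (pathEdges_nodup hnd) hch e₀ h0 d hdL).2.1 h0M hdM
    obtain ⟨r, hr⟩ := ho
    omega
  have hx'p : x' ∉ p := by
    intro hx'p
    by_cases hyh : p.head? = some x'
    · have : u = x' := Option.some_inj.1 (hh.symm.trans hyh)
      exact hu ⟨s(x,x'), heM, by rw [this]; simp⟩
    by_cases hyl : p.getLast? = some x'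
    · have hyt : x = x' := Option.some_inj.1 (hl.symm.trans hyl)
      exact hadj.ne hyt
    · obtain ⟨i, hi, hm1, hm2⟩ := interior_edges hnd hx'p hyh hyl
      have halt := List.isChain_iff_getElem.1 hch i (by omega)
      have hg : ∃ g ∈ pathEdges p, x' ∈ g ∧ g ∈ M := by
        by_cases hiw : (pathEdges p)[i]'(by omega) ∈ M
        · exact ⟨_, List.getElem_mem (show i < (pathEdges p).length by omega), hm1, hiw⟩
        · have h2 : (pathEdges p)[i+1] ∈ M := by tauto
          exact ⟨_, List.getElem_mem hi, hm2, h2⟩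
      obtain ⟨g, hgP, hyg, hgM⟩ := hg
      have : s(x,x') = g := matching_unique hM.1 heM hgM (by simp) hyg
      have hfP : s(x,x') ∈ pathEdges p := this ▸ hgP
      have := edge_of_getLast hnd hfP hl (by simp)
      rw [hdL] at this
      have : s(x,x') = d := (Option.some_inj.1 this).symm
      exact hdM (this ▸ heM)
  have hext := hp.extend hadj hx'p (by
    intro g hg
    rw [hdL, Option.mem_def, Option.some_inj] at hg
    subst hg
    constructor
    · intro h; exact absurd h hdM
    · intro h; exact absurd heM h)
  have hevenx' : EvenVtx G M x' := by
    refine ⟨u, p ++ [x'], hu, hext, ?_⟩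
    rw [pathEdges_concat p x' x hl, List.length_append]
    obtain ⟨r, hr⟩ := ho
    exact ⟨r + 1, by simp [hr]; omega⟩
  obtain ⟨u', q, hu', hq, hqe⟩ := even_trans hM hN hevenx'
  by_cases hxq : x ∈ q
  · obtain ⟨q', hq'⟩ := hq.reach_of_mem hxq
    exact ⟨u', q', hu', hq'⟩
  by_cases hqnil : pathEdges q = []
  · refine ⟨u', q ++ [x], hu', hq.extend hadj.symm hxq ?_⟩
    intro g hg
    rw [hqnil] at hg
    simp at hg
  · obtain ⟨dq, hdqL⟩ : ∃ dq, (pathEdges q).getLast? = some dq :=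
      ⟨_, List.getLast?_eq_getLast hqnil⟩
    have hdqN : dq ∈ N := by
      by_contra hdqN
      obtain ⟨eq0, hq0⟩ := head?_some_of_ne_nil hqnil
      have hq0N : eq0 ∉ N := fun hm => hu' ⟨eq0, hm, head_mem_first_edge hq.2.2.2.1 hq0⟩
      have := (alt_count N (pathEdges q) (pathEdges_nodup hq.2.1) hq.2.2.1 eq0 hq0 dq hdqL).1
        hq0N hdqN
      obtain ⟨r, hr⟩ := hqe
      omega
    have hdqx' : x' ∈ dq := getLast_mem_getLast_edge hq.2.2.2.2 hdqL
    by_cases hsN : s(x', x) ∈ N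
    · exfalso
      have heq : s(x',x) = dq := matching_unique hN.1 hsN hdqN (by simp) hdqx'
      have : x ∈ dq := heq ▸ (by simp : x ∈ s(x',x))
      exact hxq (mem_of_mem_pathEdges (mem_of_getLast?' hdqL) this)
    · refine ⟨u', q ++ [x], hu', hq.extend hadj.symm hxq ?_⟩
      intro g hg
      rw [hdqL, Option.mem_def, Option.some_inj] at hg
      subst hg
      constructor
      · intro _; exact hsN
      · intro _; exact hdqN

theorem unreachable_vertex_matched_to_unreachable' [Fintype V]
    (G : SimpleGraph V)
    (M : Set (Sym2 V)) (hM : IsMaxMatching G M)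
    (N : Set (Sym2 V)) (hN : IsMaxMatching G N)
    (v : V) (hv : UnreachableVtx G M v) :
    IsMatchedBy N v ∧ ∀ w, s(v, w) ∈ N → UnreachableVtx G M w := by
  constructor
  · by_contra hvN
    exact hv (reach_of_reach hN hM ⟨v, [v], hvN, isAltPath_singleton G N v⟩)
  · intro w hw hwreach
    obtain ⟨u, q, hu, hq⟩ := reach_of_reach hM hN hwreach
    apply hv
    apply reach_of_reach hN hM
    have hadj : G.Adj v w := (SimpleGraph.mem_edgeSet G).1 (hN.1.1 hw)
    by_cases hvq : v ∈ q
    · obtain ⟨q', hq'⟩ := hq.reach_of_mem hvq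
      exact ⟨u, q', hu, hq'⟩
    by_cases hqnil : pathEdges q = []
    · refine ⟨u, q ++ [v], hu, hq.extend hadj.symm hvq ?_⟩
      intro g hg
      rw [hqnil] at hg
      simp at hg
    · obtain ⟨dq, hdqL⟩ : ∃ dq, (pathEdges q).getLast? = some dq :=
        ⟨_, List.getLast?_eq_getLast hqnil⟩
      have hdqw : w ∈ dq := getLast_mem_getLast_edge hq.2.2.2.2 hdqL
      by_cases hdqN : dq ∈ N
      · exfalso
        have heq : s(v,w) = dq := matching_unique hN.1 hw hdqN (by simp) hdqw
        have : v ∈ dq := heq ▸ (by simp : v ∈ s(v,w))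
        exact hvq (mem_of_mem_pathEdges (mem_of_getLast?' hdqL) this)
      · refine ⟨u, q ++ [v], hu, hq.extend hadj.symm hvq ?_⟩
        intro g hg
        rw [hdqL, Option.mem_def, Option.some_inj] at hg
        subst hg
        constructor
        · intro h; exact absurd h hdqN
        · intro h
          exact absurd (show s(w,v) ∈ N by rw [Sym2.eq_swap]; exact hw) h

/-- In every maximum matching `N`, every unreachable vertex (with
respect to a fixed maximum matching `M`) is matched, and its partner in `N` is
also unreachable. -/
theorem unreachable_vertex_matched_to_unreachable [Fintype V]
    (G : SimpleGraph V) (side : V → Bool) (hbip : IsBipartiteWith G side)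
    (M : Set (Sym2 V)) (hM : IsMaxMatching G M)
    (N : Set (Sym2 V)) (hN : IsMaxMatching G N)
    (v : V) (hv : UnreachableVtx G M v) :
    IsMatchedBy N v ∧ ∀ w, s(v, w) ∈ N → UnreachableVtx G M w :=
  unreachable_vertex_matched_to_unreachable' G M hM N hN v hv
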